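/- arXiv:math/0702680 — 6 statements merged into one kernel-verified Lean document; each statement's English description precedes it below -/
import Mathlib

section
/- For all points p = (p₁, p₂) and q = (q₁, q₂) of the unit sphere S³ ⊂ ℂ², the infimum over θ₁, θ₂ ∈ ℝ of the geodesic distance arccos(Re(e^{iθ₁}·p₁·conj(q₁) + e^{iθ₂}·p₂·conj(q₂))) between (e^{iθ₁}p₁, e^{iθ₂}p₂) and q equals |arccos|p₁| − arccos|q₁||. In particular, the orbit space of the maximal torus T² acting on S³ is an interval of length π/2. -/
open Real Complex

private lemma rot_to_abs (z : ℂ) :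
    Complex.exp ((-Complex.arg z : ℝ) * Complex.I) * z = ((‖z‖ : ℝ) : ℂ) := by
  nth_rewrite 2 [← Complex.norm_mul_exp_arg_mul_I z]
  rw [mul_comm ((‖z‖ : ℂ)) _, ← mul_assoc, ← Complex.exp_add]
  rw [show ((-Complex.arg z : ℝ) : ℂ) * Complex.I + (Complex.arg z : ℝ) * Complex.I = 0 by
    push_cast; ring, Complex.exp_zero, one_mul]

/-- For points `p = (p₁, p₂)` and `q = (q₁, q₂)` on the unit sphere
`S³ ⊂ ℂ²`, the distance between the orbits of `p` and `q` under the maximal torus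
`(z, w) ↦ (e^{iθ₁}z, e^{iθ₂}w)` equals `|arccos |p₁| − arccos |q₁||`.  In particular the
orbit space of `T²` acting on `S³` is an interval of length `π/2`. -/
theorem torus_orbit_distance_on_S3 (p₁ p₂ q₁ q₂ : ℂ)
    (hp : ‖p₁‖ ^ 2 + ‖p₂‖ ^ 2 = 1)
    (hq : ‖q₁‖ ^ 2 + ‖q₂‖ ^ 2 = 1) :
    sInf {t : ℝ | ∃ θ₁ θ₂ : ℝ,
        t = Real.arccos ((Complex.exp (θ₁ * Complex.I) * p₁ * (starRingEnd ℂ) q₁ +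
          Complex.exp (θ₂ * Complex.I) * p₂ * (starRingEnd ℂ) q₂).re)} =
      |Real.arccos (‖p₁‖) - Real.arccos (‖q₁‖)| := by
  set a := ‖p₁‖ with ha_def
  set a' := ‖p₂‖ with ha'_def
  set b := ‖q₁‖ with hb_def
  set b' := ‖q₂‖ with hb'_def
  have ha0 : 0 ≤ a := norm_nonneg _
  have ha'0 : 0 ≤ a' := norm_nonneg _
  have hb0 : 0 ≤ b := norm_nonneg _
  have hb'0 : 0 ≤ b' := norm_nonneg _
  have ha1 : a ≤ 1 := by nlinarith
  have hb1 : b ≤ 1 := by nlinarith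
  set M := a * b + a' * b' with hM_def
  have hsa : Real.sqrt (1 - a ^ 2) = a' := by
    rw [show 1 - a ^ 2 = a' ^ 2 by linarith, Real.sqrt_sq ha'0]
  have hsb : Real.sqrt (1 - b ^ 2) = b' := by
    rw [show 1 - b ^ 2 = b' ^ 2 by linarith, Real.sqrt_sq hb'0]
  have hM : M = Real.cos (Real.arccos a - Real.arccos b) := by
    rw [Real.cos_sub, Real.cos_arccos (by linarith) ha1, Real.cos_arccos (by linarith) hb1,
      Real.sin_arccos, Real.sin_arccos, hsa, hsb]
  have hd : |Real.arccos a - Real.arccos b| = Real.arccos M := by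
    rw [hM, ← Real.cos_abs, Real.arccos_cos (abs_nonneg _) ?_]
    have h1 := Real.arccos_nonneg a
    have h2 := Real.arccos_nonneg b
    have h3 := Real.arccos_le_pi a
    have h4 := Real.arccos_le_pi b
    rw [abs_sub_le_iff]
    constructor <;> linarith
  rw [hd]
  have hM1 : M ≤ 1 := by rw [hM]; exact Real.cos_le_one _
  apply IsLeast.csInf_eq
  constructor
  · refine ⟨-Complex.arg (p₁ * (starRingEnd ℂ) q₁), -Complex.arg (p₂ * (starRingEnd ℂ) q₂), ?_⟩
    congr 1
    rw [mul_assoc, mul_assoc, rot_to_abs, rot_to_abs]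
    simp [norm_mul, Complex.norm_conj, hM_def, a, a', b, b']
  · rintro t ⟨θ₁, θ₂, rfl⟩
    set z₁ := Complex.exp ((θ₁ : ℂ) * Complex.I) * p₁ * (starRingEnd ℂ) q₁ with hz₁
    set z₂ := Complex.exp ((θ₂ : ℂ) * Complex.I) * p₂ * (starRingEnd ℂ) q₂ with hz₂
    have habs : ‖z₁ + z₂‖ ≤ M := by
      refine le_trans (norm_add_le _ _) ?_
      rw [hz₁, hz₂]
      simp only [norm_mul, Complex.norm_conj, Complex.norm_exp_ofReal_mul_I, one_mul]
      exact le_of_eq rfl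
    have hre : |(z₁ + z₂).re| ≤ M := le_trans (Complex.abs_re_le_norm _) habs
    rw [abs_le] at hre
    rw [Real.arccos_eq_pi_div_two_sub_arcsin, Real.arccos_eq_pi_div_two_sub_arcsin]
    have := Real.monotone_arcsin hre.2
    linarith
end

section
/- Consider the Hopf circle action on the unit quaternions S³ given by left multiplication q ↦ (cos θ + sin θ·k)·q. For all unit quaternions p and q, the infimum over θ ∈ ℝ of the geodesic distance arccos(re((cos θ + sin θ·k) * p * star q)) between (cos θ + sin θ·k)·p and q equals arccos(√(re(w)² + im_k(w)²)), where w = p * star q and im_k(w) denotes the coefficient of k in w. (This is the distance formula exhibiting S³ modulo the free circle action T_{1,1} as the round 2-sphere of radius 1/2.) -/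
open Quaternion Real

noncomputable section

/-- The unit quaternion `cos θ + sin θ · k`. -/
def rotk (θ : ℝ) : ℍ[ℝ] := ⟨Real.cos θ, 0, 0, Real.sin θ⟩

/-- For the Hopf circle action `q ↦ (cos θ + sin θ·k)·q` on the unit
quaternions, the distance between the orbits of unit quaternions `p` and `q` equals
`arccos √(re(w)² + im_k(w)²)` where `w = p · (star q)`.  (This exhibits `S³/T_{1,1}` as the
round 2-sphere of radius `1/2`.) -/
theorem hopf_orbit_distance (p q : ℍ[ℝ]) (hp : ‖p‖ = 1) (hq : ‖q‖ = 1) :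
    sInf {t : ℝ | ∃ θ : ℝ, t = Real.arccos ((rotk θ * p * star q).re)} =
      Real.arccos (Real.sqrt ((p * star q).re ^ 2 + (p * star q).imK ^ 2)) := by
  set w := p * star q with hw
  set a := w.re with ha
  set b := w.imK with hb
  have hnw : Quaternion.normSq w = 1 := by
    rw [Quaternion.normSq_eq_norm_mul_self, hw, norm_mul, norm_star, hp, hq]
    norm_num
  have hab : a ^ 2 + b ^ 2 ≤ 1 := by
    rw [Quaternion.normSq_def'] at hnw
    nlinarith [sq_nonneg w.imI, sq_nonneg w.imJ]
  set r := Real.sqrt (a ^ 2 + b ^ 2) with hr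
  have hr0 : 0 ≤ r := Real.sqrt_nonneg _
  have hr1 : r ≤ 1 := by
    rw [hr]
    calc Real.sqrt (a ^ 2 + b ^ 2) ≤ Real.sqrt 1 := Real.sqrt_le_sqrt hab
    _ = 1 := Real.sqrt_one
  have hre : ∀ θ : ℝ, (rotk θ * p * star q).re = Real.cos θ * a - Real.sin θ * b := by
    intro θ
    rw [mul_assoc, ← hw]
    rw [Quaternion.re_mul]
    simp [rotk, ha, hb]
  have hbound : ∀ θ : ℝ, Real.cos θ * a - Real.sin θ * b ≤ r := by
    intro θ
    have h1 : (Real.cos θ * a - Real.sin θ * b) ^ 2 ≤ a ^ 2 + b ^ 2 := by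
      nlinarith [Real.sin_sq_add_cos_sq θ, sq_nonneg (Real.sin θ * a + Real.cos θ * b)]
    calc Real.cos θ * a - Real.sin θ * b ≤ |Real.cos θ * a - Real.sin θ * b| := le_abs_self _
    _ = Real.sqrt ((Real.cos θ * a - Real.sin θ * b) ^ 2) := (Real.sqrt_sq_eq_abs _).symm
    _ ≤ r := Real.sqrt_le_sqrt h1
  have hattain : ∃ θ : ℝ, Real.cos θ * a - Real.sin θ * b = r := by
    rcases eq_or_lt_of_le hr0 with h0 | h0
    · refine ⟨0, ?_⟩
      have hab0 : a ^ 2 + b ^ 2 = 0 := by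
        have : Real.sqrt (a ^ 2 + b ^ 2) = 0 := h0.symm
        nlinarith [Real.sq_sqrt (by positivity : (0:ℝ) ≤ a ^ 2 + b ^ 2)]
      have ha0 : a = 0 := by nlinarith [sq_nonneg a, sq_nonneg b]
      have hb0 : b = 0 := by nlinarith [sq_nonneg a, sq_nonneg b]
      rw [ha0, hb0, ← h0]
      ring
    · set z : ℂ := ⟨a, -b⟩ with hz
      have habs : ‖z‖ = r := by
        simp [Complex.norm_def, Complex.normSq_apply, hz, hr]
        ring_nf
      have hz0 : z ≠ 0 := by
        intro h
        rw [h, norm_zero] at habs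
        exact absurd habs.symm (ne_of_gt h0)
      refine ⟨Complex.arg z, ?_⟩
      have hc := Complex.cos_arg hz0
      have hs := Complex.sin_arg z
      rw [habs] at hc hs
      rw [hc, hs]
      simp only [hz]
      have hrne : r ≠ 0 := ne_of_gt h0
      field_simp
      have : r ^ 2 = a ^ 2 + b ^ 2 := Real.sq_sqrt (by positivity)
      nlinarith
  apply le_antisymm
  · obtain ⟨θ, hθ⟩ := hattain
    apply csInf_le
    · exact ⟨0, fun t ⟨θ', ht⟩ => ht ▸ Real.arccos_nonneg _⟩
    · exact ⟨θ, by rw [hre θ, hθ]⟩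
  · refine le_csInf ⟨Real.arccos ((rotk 0 * p * star q).re), 0, rfl⟩ ?_
    rintro t ⟨θ, rfl⟩
    rw [hre θ]
    have hmono := Real.monotone_arcsin (hbound θ)
    simp only [Real.arccos]
    linarith

end
end

section
/- Let k and m be positive coprime integers and consider the circle action T_{k,m} on S³ ⊂ ℂ² given by (z, w) ↦ (e^{ikθ}z, e^{imθ}w). Then the diameter of the orbit space S³/T_{k,m} equals π/2; that is, the supremum over pairs p = (p₁,p₂), q = (q₁,q₂) ∈ S³ of the infimum over θ ∈ ℝ of arccos(Re(e^{ikθ}p₁·conj(q₁) + e^{imθ}p₂·conj(q₂))) equals π/2, the supremum being attained by the orbits of (1, 0) and (0, 1). -/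
open Real Complex

lemma sum_exp_zero (k N : ℕ) (hk : 0 < k) (hkN : k < N) :
    ∑ j ∈ Finset.range N,
      Complex.exp ((k : ℝ) * ((2 * π * j / N : ℝ) : ℂ) * Complex.I) = 0 := by
  have hN : 0 < N := hk.trans hkN
  set x : ℂ := Complex.exp ((k : ℝ) * ((2 * π / N : ℝ) : ℂ) * Complex.I) with hxdef
  have hx : ∀ j : ℕ,
      Complex.exp ((k : ℝ) * ((2 * π * j / N : ℝ) : ℂ) * Complex.I) = x ^ j := by
    intro j
    rw [hxdef, ← Complex.exp_nat_mul]
    congr 1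
    push_cast
    ring
  simp_rw [hx]
  have hx1 : x ≠ 1 := by
    rw [hxdef, Ne, Complex.exp_eq_one_iff]
    rintro ⟨n, hn⟩
    have him := congrArg Complex.im hn
    simp [Complex.mul_im, Complex.mul_re] at him
    have hNne : (N : ℝ) ≠ 0 := Nat.cast_ne_zero.mpr hN.ne'
    have hpi : (2 * π : ℝ) ≠ 0 := by positivity
    have hkNn : (k : ℝ) = n * N := by
      field_simp at him
      have h2 : (k : ℝ) * (2 * π) = (n * N) * (2 * π) := by linear_combination (2 * π) * him
      exact mul_right_cancel₀ hpi h2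
    have hz : (k : ℤ) = n * N := by exact_mod_cast hkNn
    rcases le_or_gt n 0 with h | h
    · have : (k : ℤ) ≤ 0 := by nlinarith [Int.ofNat_le.mpr (Nat.zero_le N)]
      omega
    · have : (N : ℤ) ≤ k := by nlinarith
      omega
  rw [geom_sum_eq hx1]
  have hxN : x ^ N = 1 := by
    rw [hxdef, ← Complex.exp_nat_mul]
    have h2 : (N : ℂ) * ((k : ℝ) * ((2 * π / N : ℝ) : ℂ) * Complex.I) =
        (k : ℤ) * (2 * π * Complex.I) := by
      have hNne : (N : ℂ) ≠ 0 := Nat.cast_ne_zero.mpr hN.ne'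
      push_cast
      field_simp
    rw [h2, Complex.exp_int_mul_two_pi_mul_I]
  simp [hxN]

lemma exists_theta_nonneg (k m : ℕ) (hk : 0 < k) (hm : 0 < m) (a b : ℂ) :
    ∃ θ : ℝ, 0 ≤ (Complex.exp ((k : ℝ) * θ * Complex.I) * a +
      Complex.exp ((m : ℝ) * θ * Complex.I) * b).re := by
  obtain ⟨N, hNdef⟩ : ∃ N, N = k + m := ⟨k + m, rfl⟩
  have hkN : k < N := by omega
  have hmN : m < N := by omega
  have hNpos : 0 < N := by omega
  by_contra h
  push_neg at h
  have hsum : ∑ j ∈ Finset.range N,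
      (Complex.exp ((k : ℝ) * ((2 * π * j / N : ℝ) : ℂ) * Complex.I) * a +
        Complex.exp ((m : ℝ) * ((2 * π * j / N : ℝ) : ℂ) * Complex.I) * b) = 0 := by
    rw [Finset.sum_add_distrib, ← Finset.sum_mul, ← Finset.sum_mul,
      sum_exp_zero k N hk hkN, sum_exp_zero m N hm hmN]
    simp
  have hre : ∑ j ∈ Finset.range N,
      (Complex.exp ((k : ℝ) * ((2 * π * j / N : ℝ) : ℂ) * Complex.I) * a +
        Complex.exp ((m : ℝ) * ((2 * π * j / N : ℝ) : ℂ) * Complex.I) * b).re = 0 := by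
    have h2 := congrArg Complex.re hsum
    rw [Complex.re_sum] at h2
    simpa using h2
  have hlt : ∑ j ∈ Finset.range N,
      (Complex.exp ((k : ℝ) * ((2 * π * j / N : ℝ) : ℂ) * Complex.I) * a +
        Complex.exp ((m : ℝ) * ((2 * π * j / N : ℝ) : ℂ) * Complex.I) * b).re < 0 := by
    refine Finset.sum_neg (fun j _ => ?_) (Finset.nonempty_range_iff.mpr hNpos.ne')
    exact h _
  linarith


/-- For coprime positive integers `k, m`, the circle action `T_{k,m}` on
`S³ ⊂ ℂ²`, `(z, w) ↦ (e^{ikθ}z, e^{imθ}w)`, has orbit space of diameter `π/2`; the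
supremum of orbit distances is `π/2` and it is attained by the orbits of `(1, 0)` and
`(0, 1)`. -/
theorem diameter_S3_mod_Tkm (k m : ℕ) (hk : 0 < k) (hm : 0 < m)
    (hcop : Nat.Coprime k m) :
    sSup {d : ℝ | ∃ p₁ p₂ q₁ q₂ : ℂ,
        ‖p₁‖ ^ 2 + ‖p₂‖ ^ 2 = 1 ∧
        ‖q₁‖ ^ 2 + ‖q₂‖ ^ 2 = 1 ∧
        d = sInf {t : ℝ | ∃ θ : ℝ,
          t = Real.arccos ((Complex.exp ((k : ℝ) * θ * Complex.I) * p₁ * (starRingEnd ℂ) q₁ +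
            Complex.exp ((m : ℝ) * θ * Complex.I) * p₂ * (starRingEnd ℂ) q₂).re)}} =
      π / 2 ∧
    sInf {t : ℝ | ∃ θ : ℝ,
        t = Real.arccos ((Complex.exp ((k : ℝ) * θ * Complex.I) * 1 * (starRingEnd ℂ) 0 +
          Complex.exp ((m : ℝ) * θ * Complex.I) * 0 * (starRingEnd ℂ) 1).re)} = π / 2 := by
  have hsecond : sInf {t : ℝ | ∃ θ : ℝ,
      t = Real.arccos ((Complex.exp ((k : ℝ) * θ * Complex.I) * 1 * (starRingEnd ℂ) 0 +
        Complex.exp ((m : ℝ) * θ * Complex.I) * 0 * (starRingEnd ℂ) 1).re)} = π / 2 := by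
    have hset : {t : ℝ | ∃ θ : ℝ,
        t = Real.arccos ((Complex.exp ((k : ℝ) * θ * Complex.I) * 1 * (starRingEnd ℂ) 0 +
          Complex.exp ((m : ℝ) * θ * Complex.I) * 0 * (starRingEnd ℂ) 1).re)} = {π / 2} := by
      ext t
      simp [Real.arccos_zero]
    rw [hset, csInf_singleton]
  refine ⟨?_, hsecond⟩
  apply le_antisymm
  · apply csSup_le
    · exact ⟨π / 2, 1, 0, 0, 1, by simp, by simp, hsecond.symm⟩
    · rintro d ⟨p₁, p₂, q₁, q₂, -, -, rfl⟩
      obtain ⟨θ₀, hθ₀⟩ := exists_theta_nonneg k m hk hm (p₁ * (starRingEnd ℂ) q₁)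
        (p₂ * (starRingEnd ℂ) q₂)
      have hmem : Real.arccos ((Complex.exp ((k : ℝ) * θ₀ * Complex.I) * p₁ * (starRingEnd ℂ) q₁ +
          Complex.exp ((m : ℝ) * θ₀ * Complex.I) * p₂ * (starRingEnd ℂ) q₂).re) ∈
          {t : ℝ | ∃ θ : ℝ,
          t = Real.arccos ((Complex.exp ((k : ℝ) * θ * Complex.I) * p₁ * (starRingEnd ℂ) q₁ +
            Complex.exp ((m : ℝ) * θ * Complex.I) * p₂ * (starRingEnd ℂ) q₂).re)} := ⟨θ₀, rfl⟩
      have hbdd : BddBelow {t : ℝ | ∃ θ : ℝ,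
          t = Real.arccos ((Complex.exp ((k : ℝ) * θ * Complex.I) * p₁ * (starRingEnd ℂ) q₁ +
            Complex.exp ((m : ℝ) * θ * Complex.I) * p₂ * (starRingEnd ℂ) q₂).re)} := by
        refine ⟨0, ?_⟩
        rintro t ⟨θ, rfl⟩
        exact Real.arccos_nonneg _
      refine (csInf_le hbdd hmem).trans ?_
      rw [Real.arccos_le_pi_div_two]
      have : Complex.exp ((k : ℝ) * θ₀ * Complex.I) * p₁ * (starRingEnd ℂ) q₁ +
          Complex.exp ((m : ℝ) * θ₀ * Complex.I) * p₂ * (starRingEnd ℂ) q₂ =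
          Complex.exp ((k : ℝ) * θ₀ * Complex.I) * (p₁ * (starRingEnd ℂ) q₁) +
          Complex.exp ((m : ℝ) * θ₀ * Complex.I) * (p₂ * (starRingEnd ℂ) q₂) := by ring
      rw [this]
      exact hθ₀
  · apply le_csSup
    · refine ⟨π / 2, ?_⟩
      rintro d ⟨p₁, p₂, q₁, q₂, -, -, rfl⟩
      obtain ⟨θ₀, hθ₀⟩ := exists_theta_nonneg k m hk hm (p₁ * (starRingEnd ℂ) q₁)
        (p₂ * (starRingEnd ℂ) q₂)
      have hmem : Real.arccos ((Complex.exp ((k : ℝ) * θ₀ * Complex.I) * p₁ * (starRingEnd ℂ) q₁ +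
          Complex.exp ((m : ℝ) * θ₀ * Complex.I) * p₂ * (starRingEnd ℂ) q₂).re) ∈
          {t : ℝ | ∃ θ : ℝ,
          t = Real.arccos ((Complex.exp ((k : ℝ) * θ * Complex.I) * p₁ * (starRingEnd ℂ) q₁ +
            Complex.exp ((m : ℝ) * θ * Complex.I) * p₂ * (starRingEnd ℂ) q₂).re)} := ⟨θ₀, rfl⟩
      have hbdd : BddBelow {t : ℝ | ∃ θ : ℝ,
          t = Real.arccos ((Complex.exp ((k : ℝ) * θ * Complex.I) * p₁ * (starRingEnd ℂ) q₁ +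
            Complex.exp ((m : ℝ) * θ * Complex.I) * p₂ * (starRingEnd ℂ) q₂).re)} := by
        refine ⟨0, ?_⟩
        rintro t ⟨θ, rfl⟩
        exact Real.arccos_nonneg _
      refine (csInf_le hbdd hmem).trans ?_
      rw [Real.arccos_le_pi_div_two]
      have : Complex.exp ((k : ℝ) * θ₀ * Complex.I) * p₁ * (starRingEnd ℂ) q₁ +
          Complex.exp ((m : ℝ) * θ₀ * Complex.I) * p₂ * (starRingEnd ℂ) q₂ =
          Complex.exp ((k : ℝ) * θ₀ * Complex.I) * (p₁ * (starRingEnd ℂ) q₁) +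
          Complex.exp ((m : ℝ) * θ₀ * Complex.I) * (p₂ * (starRingEnd ℂ) q₂) := by ring
      rw [this]
      exact hθ₀
    · exact ⟨1, 0, 0, 1, by simp, by simp, hsecond.symm⟩
end

section
/- Let m, n ≥ 1 and L = lcm(m, n). Then the set of products {a * star b : a ∈ 𝐃_m, b ∈ 𝐃_n} of elements of the binary dihedral groups equals 𝐂_{2L} ∪ 𝐂_{2L}·i. (That is, the orbit of the quaternion 1 under the group (𝐃_m/𝐃_m; 𝐃_n/𝐃_n) acting by q ↦ a·q·b⁻¹ is 𝐂_{2L} ∪ 𝐂_{2L}·i.) -/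
open Quaternion Real

noncomputable section

/-- The quaternion `i`. -/
def qi : ℍ[ℝ] := ⟨0, 1, 0, 0⟩

/-- The element `cos(mπ/n) + sin(mπ/n)·k` of the binary cyclic group `𝐂_{2n}`. -/
def cycElt (n m : ℕ) : ℍ[ℝ] :=
  ⟨Real.cos (m * π / n), 0, 0, Real.sin (m * π / n)⟩

/-- The binary cyclic group `𝐂_{2n} = {cos(mπ/n) + sin(mπ/n)·k : m = 0,…,2n−1}`. -/
def binC2 (n : ℕ) : Set ℍ[ℝ] := {q | ∃ m : ℕ, m < 2 * n ∧ q = cycElt n m}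

/-- The element `cos(mπ/n)·i + sin(mπ/n)·j` of the binary dihedral group `𝐃_n`. -/
def dihElt (n m : ℕ) : ℍ[ℝ] :=
  ⟨0, Real.cos (m * π / n), Real.sin (m * π / n), 0⟩

/-- The binary dihedral group
`𝐃_n = 𝐂_{2n} ∪ {cos(mπ/n)·i + sin(mπ/n)·j : m = 0,…,2n−1}` (4n elements). -/
def binD (n : ℕ) : Set ℍ[ℝ] :=
  binC2 n ∪ {q | ∃ m : ℕ, m < 2 * n ∧ q = dihElt n m}

def cyc (θ : ℝ) : ℍ[ℝ] := ⟨Real.cos θ, 0, 0, Real.sin θ⟩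
def dih (θ : ℝ) : ℍ[ℝ] := ⟨0, Real.cos θ, Real.sin θ, 0⟩

lemma cyc_mul_star_cyc (θ φ : ℝ) : cyc θ * star (cyc φ) = cyc (θ - φ) := by
  simp only [Quaternion.ext_iff, Quaternion.re_mul, Quaternion.imI_mul,
    Quaternion.imJ_mul, Quaternion.imK_mul, Quaternion.re_star, Quaternion.imI_star,
    Quaternion.imJ_star, Quaternion.imK_star]
  simp only [cyc, Real.cos_sub, Real.sin_sub]
  refine ⟨by ring, by ring, by ring, by ring⟩

lemma dih_mul_star_cyc (θ φ : ℝ) : dih θ * star (cyc φ) = dih (θ + φ) := by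
  simp only [Quaternion.ext_iff, Quaternion.re_mul, Quaternion.imI_mul,
    Quaternion.imJ_mul, Quaternion.imK_mul, Quaternion.re_star, Quaternion.imI_star,
    Quaternion.imJ_star, Quaternion.imK_star]
  simp only [cyc, dih, Real.cos_add, Real.sin_add]
  refine ⟨by ring, by ring, by ring, by ring⟩

lemma cyc_mul_star_dih (θ φ : ℝ) : cyc θ * star (dih φ) = dih (θ + φ + π) := by
  simp only [Quaternion.ext_iff, Quaternion.re_mul, Quaternion.imI_mul,
    Quaternion.imJ_mul, Quaternion.imK_mul, Quaternion.re_star, Quaternion.imI_star,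
    Quaternion.imJ_star, Quaternion.imK_star]
  simp only [cyc, dih, Real.cos_add, Real.sin_add, Real.cos_pi, Real.sin_pi]
  refine ⟨by ring, by ring, by ring, by ring⟩

lemma dih_mul_star_dih (θ φ : ℝ) : dih θ * star (dih φ) = cyc (θ - φ) := by
  simp only [Quaternion.ext_iff, Quaternion.re_mul, Quaternion.imI_mul,
    Quaternion.imJ_mul, Quaternion.imK_mul, Quaternion.re_star, Quaternion.imI_star,
    Quaternion.imJ_star, Quaternion.imK_star]
  simp only [cyc, dih, Real.cos_sub, Real.sin_sub]
  refine ⟨by ring, by ring, by ring, by ring⟩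

lemma cyc_mul_qi (θ : ℝ) : cyc θ * qi = dih θ := by
  simp only [Quaternion.ext_iff, Quaternion.re_mul, Quaternion.imI_mul,
    Quaternion.imJ_mul, Quaternion.imK_mul]
  simp only [cyc, dih, qi]
  refine ⟨by ring, by ring, by ring, by ring⟩

lemma cyc_int (L : ℕ) (hL : 1 ≤ L) (t : ℤ) :
    cyc ((t : ℝ) * π / L) = cycElt L (t.emod (2 * L)).toNat ∧ (t.emod (2 * L)).toNat < 2 * L := by
  have h2L : (0:ℤ) < 2 * L := by positivity
  have hr0 : 0 ≤ t.emod (2 * L) := Int.emod_nonneg t (by omega)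
  have hrlt : t.emod (2 * L) < 2 * L := Int.emod_lt_of_pos t h2L
  constructor
  · have hLe : ((t.emod (2*L)).toNat : ℝ) = ((t.emod (2*L) : ℤ) : ℝ) := by
      exact_mod_cast congrArg (fun z : ℤ => (z : ℝ)) (Int.toNat_of_nonneg hr0)
    have key : (t : ℝ) * π / L = ((t.emod (2*L) : ℤ) : ℝ) * π / L + (t.ediv (2*L)) * (2 * π) := by
      have := Int.mul_ediv_add_emod t (2 * L)
      have hL0 : (L : ℝ) ≠ 0 := by positivity
      have hc : (2:ℝ) * L * ((t.ediv (2*L)) : ℝ) + ((t.emod (2*L)):ℝ) = t := by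
        exact_mod_cast this
      field_simp
      linear_combination (-1) * hc
    rw [cycElt, cyc, key, hLe]
    rw [Real.cos_add_int_mul_two_pi, Real.sin_add_int_mul_two_pi]
  · omega

lemma ang (a m L : ℕ) (hm : m ≠ 0) (hL : L ≠ 0) (h : m * (L / m) = L) :
    (a : ℝ) * π / m = ((a * (L / m) : ℕ) : ℝ) * π / L := by
  have h1 : (m : ℝ) * ((L / m : ℕ) : ℝ) = L := by exact_mod_cast h
  have hm0 : (m : ℝ) ≠ 0 := Nat.cast_ne_zero.mpr hm
  have hL0 : (L : ℝ) ≠ 0 := Nat.cast_ne_zero.mpr hL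
  field_simp
  push_cast; linear_combination (-(a : ℝ)) * h1

lemma key (m n : ℕ) (hm : 1 ≤ m) (hn : 1 ≤ n) (ε : ℤ) (hε : ε = 1 ∨ ε = -1) (c : ℤ) :
    ∃ a b : ℕ, a < 2 * m ∧ b < 2 * n ∧ ∃ k : ℤ,
      (a : ℤ) * (Nat.lcm m n / m : ℕ) + ε * b * (Nat.lcm m n / n : ℕ)
        = c + 2 * (Nat.lcm m n) * k := by
  set L := Nat.lcm m n with hLdef
  have hg : 0 < Nat.gcd m n := Nat.gcd_pos_of_pos_left n hm
  have h1 : L / m = n / Nat.gcd m n := by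
    rw [hLdef, Nat.lcm, Nat.mul_div_assoc m (Nat.gcd_dvd_right m n),
      Nat.mul_div_cancel_left _ hm]
  have h2 : L / n = m / Nat.gcd m n := by
    rw [hLdef, Nat.lcm_comm, Nat.lcm, Nat.mul_div_assoc n (Nat.gcd_dvd_right n m),
      Nat.mul_div_cancel_left _ hn, Nat.gcd_comm]
  have hcop : Nat.Coprime (L / m) (L / n) := by
    rw [h1, h2]; exact (Nat.coprime_div_gcd_div_gcd hg).symm
  obtain ⟨u, v, huv⟩ := Nat.isCoprime_iff_coprime.mpr hcop
  have hmm' : (m : ℤ) * (L / m : ℕ) = L := by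
    exact_mod_cast Nat.mul_div_cancel' (Nat.dvd_lcm_left m n)
  have hnn' : (n : ℤ) * (L / n : ℕ) = L := by
    exact_mod_cast Nat.mul_div_cancel' (Nat.dvd_lcm_right m n)
  set x : ℤ := c * u with hx
  set y : ℤ := ε * (c * v) with hy
  have h2m : (0:ℤ) < 2 * m := by positivity
  have h2n : (0:ℤ) < 2 * n := by positivity
  refine ⟨(x % (2*m) : ℤ).toNat, (y % (2*n)).toNat, ?_, ?_, ?_⟩
  · have := Int.emod_lt_of_pos x h2m
    have := Int.emod_nonneg x (by omega : (2*(m:ℤ)) ≠ 0)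
    omega
  · have := Int.emod_lt_of_pos y h2n
    have := Int.emod_nonneg y (by omega : (2*(n:ℤ)) ≠ 0)
    omega
  · have ha : ((x % (2*m) : ℤ).toNat : ℤ) = x - 2*m*(x / (2*m)) := by
      rw [Int.toNat_of_nonneg (Int.emod_nonneg x (by omega)), Int.emod_def]
    have hb : ((y % (2*n)).toNat : ℤ) = y - 2*n*(y / (2*n)) := by
      rw [Int.toNat_of_nonneg (Int.emod_nonneg y (by omega)), Int.emod_def]
    refine ⟨-(x / (2*m) + ε * (y / (2*n))), ?_⟩
    rw [ha, hb]
    rcases hε with rfl | rfl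
    · simp only [hx, hy]
      linear_combination c * huv - 2 * (x / (2*m)) * hmm' - 2 * (y / (2*n)) * hnn'
    · simp only [hx, hy]
      linear_combination c * huv - 2 * (x / (2*m)) * hmm' + 2 * (y / (2*n)) * hnn'

lemma mem_left (L : ℕ) (hL : 1 ≤ L) (t : ℤ) (q : ℍ[ℝ]) (h : q = cyc ((t:ℝ)*π/L)) :
    q ∈ binC2 L := by
  obtain ⟨h1, h2⟩ := cyc_int L hL t
  exact ⟨_, h2, by rw [h, h1]⟩

lemma mem_right (L : ℕ) (hL : 1 ≤ L) (t : ℤ) (q : ℍ[ℝ]) (h : q = dih ((t:ℝ)*π/L)) :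
    q ∈ {q : ℍ[ℝ] | ∃ c ∈ binC2 L, q = c * qi} := by
  obtain ⟨h1, h2⟩ := cyc_int L hL t
  exact ⟨cycElt L _, ⟨_, h2, rfl⟩, by rw [h, ← cyc_mul_qi, h1]⟩

lemma cyc_shift (L : ℕ) (hL : 1 ≤ L) (c : ℕ) (k : ℤ) :
    cyc (((c + 2*L*k : ℤ) : ℝ) * π / L) = cycElt L c := by
  have hL0 : (L:ℝ) ≠ 0 := by positivity
  have e : ((c + 2*L*k : ℤ):ℝ) * π / L = (c:ℝ)*π/L + k * (2*π) := by
    field_simp; push_cast; ring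
  show (⟨_,_,_,_⟩ : ℍ[ℝ]) = _
  rw [cycElt, e, Real.cos_add_int_mul_two_pi, Real.sin_add_int_mul_two_pi]

lemma dih_shift (L : ℕ) (hL : 1 ≤ L) (c : ℕ) (k : ℤ) :
    dih (((c + 2*L*k : ℤ) : ℝ) * π / L) = cycElt L c * qi := by
  rw [← cyc_mul_qi, cyc_shift L hL c k]

/-- For `m, n ≥ 1` and `L = lcm(m, n)`, the orbit of the quaternion `1`
under the group `(𝐃_m/𝐃_m; 𝐃_n/𝐃_n)` acting by `q ↦ a·q·b⁻¹` is `𝐂_{2L} ∪ 𝐂_{2L}·i`. -/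
theorem orbit_of_one_under_binaryDihedral_product (m n : ℕ) (hm : 1 ≤ m) (hn : 1 ≤ n) :
    {q : ℍ[ℝ] | ∃ a ∈ binD m, ∃ b ∈ binD n, q = a * star b} =
      binC2 (Nat.lcm m n) ∪ {q : ℍ[ℝ] | ∃ c ∈ binC2 (Nat.lcm m n), q = c * qi} := by

  set L := Nat.lcm m n with hLdef
  have hL : 1 ≤ L := Nat.pos_of_ne_zero (Nat.lcm_ne_zero (by omega) (by omega))
  have hm0 : m ≠ 0 := by omega
  have hn0 : n ≠ 0 := by omega
  have hL0 : L ≠ 0 := by omega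
  have hLr : (L:ℝ) ≠ 0 := Nat.cast_ne_zero.mpr hL0
  have hmL : m * (L / m) = L := Nat.mul_div_cancel' (Nat.dvd_lcm_left m n)
  have hnL : n * (L / n) = L := Nat.mul_div_cancel' (Nat.dvd_lcm_right m n)
  have angm : ∀ a : ℕ, (a:ℝ) * π / m = ((a * (L/m) : ℕ):ℝ) * π / L :=
    fun a => ang a m L hm0 hL0 hmL
  have angn : ∀ b : ℕ, (b:ℝ) * π / n = ((b * (L/n) : ℕ):ℝ) * π / L :=
    fun b => ang b n L hn0 hL0 hnL
  ext q
  constructor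
  · rintro ⟨A, hA, B, hB, rfl⟩
    rcases hA with ⟨a, ha, rfl⟩ | ⟨a, ha, rfl⟩ <;> rcases hB with ⟨b, hb, rfl⟩ | ⟨b, hb, rfl⟩
    · left
      refine mem_left L hL ((a * (L/m) : ℕ) - (b * (L/n) : ℕ)) _ ?_
      rw [show cycElt m a = cyc ((a:ℝ)*π/m) from rfl,
        show cycElt n b = cyc ((b:ℝ)*π/n) from rfl, cyc_mul_star_cyc]
      rw [angm a, angn b]
      congr 1
      simp only [Int.cast_sub, Int.cast_natCast]
      ring
    · right
      refine mem_right L hL ((a * (L/m) : ℕ) + (b * (L/n) : ℕ) + L) _ ?_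
      rw [show cycElt m a = cyc ((a:ℝ)*π/m) from rfl,
        show dihElt n b = dih ((b:ℝ)*π/n) from rfl, cyc_mul_star_dih]
      rw [angm a, angn b]
      congr 1
      simp only [Int.cast_add, Int.cast_natCast]
      field_simp
    · right
      refine mem_right L hL ((a * (L/m) : ℕ) + (b * (L/n) : ℕ)) _ ?_
      rw [show dihElt m a = dih ((a:ℝ)*π/m) from rfl,
        show cycElt n b = cyc ((b:ℝ)*π/n) from rfl, dih_mul_star_cyc]
      rw [angm a, angn b]
      congr 1
      simp only [Int.cast_add, Int.cast_natCast]
      ring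
    · left
      refine mem_left L hL ((a * (L/m) : ℕ) - (b * (L/n) : ℕ)) _ ?_
      rw [show dihElt m a = dih ((a:ℝ)*π/m) from rfl,
        show dihElt n b = dih ((b:ℝ)*π/n) from rfl, dih_mul_star_dih]
      rw [angm a, angn b]
      congr 1
      simp only [Int.cast_sub, Int.cast_natCast]
      ring
  · rintro (⟨c, hc, rfl⟩ | ⟨C, ⟨c, hc, rfl⟩, rfl⟩)
    · obtain ⟨a, b, ha, hb, k, hk⟩ := key m n hm hn (-1) (Or.inr rfl) c
      refine ⟨cycElt m a, Or.inl ⟨a, ha, rfl⟩, cycElt n b, Or.inl ⟨b, hb, rfl⟩, ?_⟩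
      rw [show cycElt m a = cyc ((a:ℝ)*π/m) from rfl,
        show cycElt n b = cyc ((b:ℝ)*π/n) from rfl, cyc_mul_star_cyc]
      rw [← cyc_shift L hL c k]
      congr 1
      rw [angm a, angn b]
      have hk' : (a:ℤ) * (L/m : ℕ) - (b:ℤ) * (L/n : ℕ) = c + 2*(L:ℤ)*k := by linarith [hk]
      have hkr : (a:ℝ) * ((L/m : ℕ):ℝ) - (b:ℝ) * ((L/n : ℕ):ℝ)
          = (c:ℝ) + 2*(L:ℝ)*(k:ℝ) := by exact_mod_cast hk'
      push_cast
      linear_combination (-(π / (L:ℝ))) * hkr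
    · obtain ⟨a, b, ha, hb, k, hk⟩ := key m n hm hn 1 (Or.inl rfl) c
      refine ⟨dihElt m a, Or.inr ⟨a, ha, rfl⟩, cycElt n b, Or.inl ⟨b, hb, rfl⟩, ?_⟩
      rw [show dihElt m a = dih ((a:ℝ)*π/m) from rfl,
        show cycElt n b = cyc ((b:ℝ)*π/n) from rfl, dih_mul_star_cyc]
      rw [← dih_shift L hL c k]
      congr 1
      rw [angm a, angn b]
      have hkz : ((a * (L/m) + b * (L/n) : ℕ) : ℤ) = c + 2*(L:ℤ)*k := by
        rw [Nat.cast_add, Nat.cast_mul, Nat.cast_mul]; linarith [hk]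
      have hkr := congrArg (fun z : ℤ => (z : ℝ)) hkz
      simp only [Int.cast_add, Int.cast_mul, Int.cast_natCast, Int.cast_ofNat,
        Nat.cast_add, Nat.cast_mul] at hkr
      push_cast
      linear_combination (-(π / (L:ℝ))) * hkr


end
end

section
/- Let m, n ≥ 1, L = lcm(m, n), and let v be the unit quaternion v = (cos(π/(2L)) + cos(π/(2L))·i + sin(π/(2L))·j + sin(π/(2L))·k)/√2. Then for all a ∈ 𝐃_m and b ∈ 𝐃_n one has re(a * v * star b) ≤ cos(π/(2L))/√2, with equality when a = b = 1. Consequently, the distance in the orbit space of S³ under the action q ↦ a·q·b⁻¹ (a ∈ 𝐃_m, b ∈ 𝐃_n) between the orbit of 1 and the orbit of v is exactly arccos(cos(π/(2L))/√2), so the diameter of this orbit space is strictly greater than π/4. -/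
open Quaternion Real

noncomputable section

/-- The unit quaternion
`v = (cos(π/(2L)) + cos(π/(2L))·i + sin(π/(2L))·j + sin(π/(2L))·k)/√2`. -/
def dihVertex (L : ℕ) : ℍ[ℝ] :=
  ⟨Real.cos (π / (2 * L)) / Real.sqrt 2, Real.cos (π / (2 * L)) / Real.sqrt 2,
    Real.sin (π / (2 * L)) / Real.sqrt 2, Real.sin (π / (2 * L)) / Real.sqrt 2⟩

/-! ### Auxiliary lemmas -/

lemma re_cc (θ α β : ℝ) :
    (((⟨Real.cos α,0,0,Real.sin α⟩ : ℍ[ℝ]) *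
      ⟨Real.cos θ/Real.sqrt 2, Real.cos θ/Real.sqrt 2, Real.sin θ/Real.sqrt 2, Real.sin θ/Real.sqrt 2⟩) *
      star (⟨Real.cos β,0,0,Real.sin β⟩ : ℍ[ℝ])).re = Real.cos (θ + α - β) / Real.sqrt 2 := by
  erw [Quaternion.re_mul, Quaternion.re_star, Quaternion.imI_star, Quaternion.imJ_star,
    Quaternion.imK_star, Quaternion.re_mul, Quaternion.imI_mul, Quaternion.imJ_mul,
    Quaternion.imK_mul]
  dsimp only
  rw [show θ + α - β = (θ + α) - β by ring, Real.cos_sub, Real.cos_add, Real.sin_add]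
  ring

lemma re_cd (θ α β : ℝ) :
    (((⟨Real.cos α,0,0,Real.sin α⟩ : ℍ[ℝ]) *
      ⟨Real.cos θ/Real.sqrt 2, Real.cos θ/Real.sqrt 2, Real.sin θ/Real.sqrt 2, Real.sin θ/Real.sqrt 2⟩) *
      star (⟨0,Real.cos β,Real.sin β,0⟩ : ℍ[ℝ])).re = Real.cos (θ + α - β) / Real.sqrt 2 := by
  erw [Quaternion.re_mul, Quaternion.re_star, Quaternion.imI_star, Quaternion.imJ_star,
    Quaternion.imK_star, Quaternion.re_mul, Quaternion.imI_mul, Quaternion.imJ_mul,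
    Quaternion.imK_mul]
  dsimp only
  rw [show θ + α - β = (θ + α) - β by ring, Real.cos_sub, Real.cos_add, Real.sin_add]
  ring

lemma re_dc (θ α β : ℝ) :
    (((⟨0,Real.cos α,Real.sin α,0⟩ : ℍ[ℝ]) *
      ⟨Real.cos θ/Real.sqrt 2, Real.cos θ/Real.sqrt 2, Real.sin θ/Real.sqrt 2, Real.sin θ/Real.sqrt 2⟩) *
      star (⟨Real.cos β,0,0,Real.sin β⟩ : ℍ[ℝ])).re = -(Real.cos (θ - α + β) / Real.sqrt 2) := by
  erw [Quaternion.re_mul, Quaternion.re_star, Quaternion.imI_star, Quaternion.imJ_star,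
    Quaternion.imK_star, Quaternion.re_mul, Quaternion.imI_mul, Quaternion.imJ_mul,
    Quaternion.imK_mul]
  dsimp only
  rw [show θ - α + β = (θ - α) + β by ring, Real.cos_add, Real.cos_sub, Real.sin_sub]
  ring

lemma re_dd (θ α β : ℝ) :
    (((⟨0,Real.cos α,Real.sin α,0⟩ : ℍ[ℝ]) *
      ⟨Real.cos θ/Real.sqrt 2, Real.cos θ/Real.sqrt 2, Real.sin θ/Real.sqrt 2, Real.sin θ/Real.sqrt 2⟩) *
      star (⟨0,Real.cos β,Real.sin β,0⟩ : ℍ[ℝ])).re = Real.cos (θ - α + β) / Real.sqrt 2 := by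
  erw [Quaternion.re_mul, Quaternion.re_star, Quaternion.imI_star, Quaternion.imJ_star,
    Quaternion.imK_star, Quaternion.re_mul, Quaternion.imI_mul, Quaternion.imJ_mul,
    Quaternion.imK_mul]
  dsimp only
  rw [show θ - α + β = (θ - α) + β by ring, Real.cos_add, Real.cos_sub, Real.sin_sub]
  ring

lemma sin_prod_nonneg (L : ℕ) (hL : 1 ≤ L) (t : ℤ) :
    0 ≤ Real.sin (t * (π / (2 * L))) * Real.sin ((t + 1) * (π / (2 * L))) := by
  have hL0 : (0:ℝ) < (L:ℝ) := by exact_mod_cast hL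
  set θ : ℝ := π / (2 * L) with hθ
  have hθ0 : 0 < θ := by positivity
  have h2L : (2 * (L:ℝ)) * θ = π := by
    rw [hθ]; field_simp
  have h4L : (0:ℤ) < 4 * L := by positivity
  set r : ℤ := t % (4 * L) with hr
  have hr0 : 0 ≤ r := Int.emod_nonneg t (by positivity)
  have hr4 : r < 4 * L := Int.emod_lt_of_pos t h4L
  have hdiv : (4 * L : ℤ) * (t / (4 * L)) + r = t := Int.mul_ediv_add_emod t (4 * L)
  set q : ℤ := t / (4 * L)
  have ht : (t:ℝ) = (r:ℝ) + q * (4 * L) := by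
    have := congrArg (Int.cast : ℤ → ℝ) hdiv
    push_cast at this
    linarith
  have e1 : (t:ℝ) * θ = (r:ℝ) * θ + q * (2 * π) := by
    rw [ht]; rw [show ((r:ℝ) + q * (4*L)) * θ = r * θ + q * ((2*(L:ℝ))*θ * 2) by ring, h2L]; ring
  have e2 : ((t:ℝ) + 1) * θ = ((r:ℝ) + 1) * θ + q * (2 * π) := by
    rw [ht]; rw [show ((r:ℝ) + q * (4*L) + 1) * θ = (r+1) * θ + q * ((2*(L:ℝ))*θ * 2) by ring, h2L]
    ring
  rw [e1, e2, Real.sin_add_int_mul_two_pi, Real.sin_add_int_mul_two_pi]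
  rcases lt_or_ge r (2 * L) with h | h
  · have h1 : (0:ℝ) ≤ (r:ℝ) * θ := by positivity
    have h2 : ((r:ℝ) + 1) * θ ≤ π := by
      rw [← h2L]
      have : (r:ℝ) + 1 ≤ 2 * L := by exact_mod_cast h
      nlinarith
    exact mul_nonneg (Real.sin_nonneg_of_nonneg_of_le_pi h1 (by nlinarith))
      (Real.sin_nonneg_of_nonneg_of_le_pi (by positivity) h2)
  · have hc : ((r:ℝ)) ≥ 2 * L := by exact_mod_cast h
    have hc4 : ((r:ℝ)) < 4 * L := by exact_mod_cast hr4
    have f1 : (r:ℝ) * θ = ((r:ℝ) - 2*L) * θ + π := by rw [← h2L]; ring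
    have f2 : ((r:ℝ)+1) * θ = ((r:ℝ)+1 - 2*L) * θ + π := by rw [← h2L]; ring
    rw [f1, f2, Real.sin_add_pi, Real.sin_add_pi]
    have s1 : 0 ≤ Real.sin (((r:ℝ) - 2*L) * θ) := by
      apply Real.sin_nonneg_of_nonneg_of_le_pi
      · nlinarith
      · rw [← h2L]; nlinarith
    have hi : r + 1 ≤ 4 * L := hr4
    have hc4' : (r:ℝ) + 1 ≤ 4 * L := by exact_mod_cast hi
    have s2 : 0 ≤ Real.sin (((r:ℝ)+1 - 2*L) * θ) := by
      apply Real.sin_nonneg_of_nonneg_of_le_pi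
      · nlinarith
      · rw [← h2L]; nlinarith
    nlinarith

lemma cos_odd_le (L : ℕ) (hL : 1 ≤ L) (t : ℤ) :
    Real.cos ((2 * (t:ℝ) + 1) * (π / (2 * L))) ≤ Real.cos (π / (2 * L)) := by
  set θ : ℝ := π / (2 * L) with hθ
  have key := sin_prod_nonneg L hL t
  have h := Real.cos_sub_cos θ ((2 * (t:ℝ) + 1) * θ)
  rw [show (θ + (2 * (t:ℝ) + 1) * θ) / 2 = ((t:ℝ) + 1) * θ by ring,
    show (θ - (2 * (t:ℝ) + 1) * θ) / 2 = -((t:ℝ) * θ) by ring, Real.sin_neg] at h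
  push_cast at key
  nlinarith

lemma angle_eq {N L k : ℕ} (hN : 1 ≤ N) (hL : 1 ≤ L) (hk : k * N = L) (p : ℕ) :
    (p:ℝ) * π / N = 2 * (p:ℝ) * (k:ℝ) * (π / (2 * (L:ℝ))) := by
  have hN0 : ((N:ℝ)) ≠ 0 := by positivity
  have hk1 : 1 ≤ k := by
    rcases Nat.eq_zero_or_pos k with h | h
    · subst h; simp at hk; omega
    · exact h
  have hk0 : ((k:ℝ)) ≠ 0 := by positivity
  have h : (k:ℝ) * N = L := by exact_mod_cast hk
  rw [← h]
  field_simp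

lemma binD_norm {N : ℕ} {a : ℍ[ℝ]} (h : a ∈ binD N) : ‖a‖ = 1 := by
  have hsq : Quaternion.normSq a = 1 := by
    rcases h with ⟨p, _, rfl⟩ | ⟨p, _, rfl⟩ <;>
      · rw [Quaternion.normSq_def']
        dsimp [cycElt, dihElt]
        nlinarith [Real.sin_sq_add_cos_sq ((p:ℝ) * π / N)]
  have h2 : ‖a‖ * ‖a‖ = 1 := by rw [← Quaternion.normSq_eq_norm_mul_self, hsq]
  rcases mul_self_eq_one_iff.mp h2 with h | h
  · exact h
  · nlinarith [norm_nonneg a]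

lemma dihVertex_norm (L : ℕ) : ‖dihVertex L‖ = 1 := by
  have hs2 : Real.sqrt 2 * Real.sqrt 2 = 2 := Real.mul_self_sqrt (by norm_num)
  have hsq : Quaternion.normSq (dihVertex L) = 1 := by
    rw [Quaternion.normSq_def']
    dsimp [dihVertex]
    have := Real.sin_sq_add_cos_sq (π / (2 * (L:ℝ)))
    field_simp
    nlinarith
  have h2 : ‖dihVertex L‖ * ‖dihVertex L‖ = 1 := by
    rw [← Quaternion.normSq_eq_norm_mul_self, hsq]
  rcases mul_self_eq_one_iff.mp h2 with h | h
  · exact h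
  · nlinarith [norm_nonneg (dihVertex L)]

lemma one_mem_binD {N : ℕ} (hN : 1 ≤ N) : (1 : ℍ[ℝ]) ∈ binD N := by
  left
  refine ⟨0, by omega, ?_⟩
  ext <;> simp [cycElt]

lemma arccos_antitone {x y : ℝ} (h : x ≤ y) : Real.arccos y ≤ Real.arccos x := by
  simp only [Real.arccos_eq_pi_div_two_sub_arcsin]
  have := Real.monotone_arcsin h
  linarith

/-- For `m, n ≥ 1`, `L = lcm(m, n)` and the vertex `v` above:
`re(a·v·b⁻¹) ≤ cos(π/(2L))/√2` for all `a ∈ 𝐃_m`, `b ∈ 𝐃_n`, with equality at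
`a = b = 1`; hence the distance between the orbits of `1` and `v` under
`q ↦ a·q·b⁻¹` is exactly `arccos(cos(π/(2L))/√2)`, and the diameter of the orbit
space is strictly greater than `π/4`. -/
theorem binaryDihedral_product_vertex_distance (m n : ℕ) (hm : 1 ≤ m) (hn : 1 ≤ n) :
    (∀ a ∈ binD m, ∀ b ∈ binD n,
        (a * dihVertex (Nat.lcm m n) * star b).re ≤
          Real.cos (π / (2 * Nat.lcm m n)) / Real.sqrt 2) ∧
    ((1 : ℍ[ℝ]) * dihVertex (Nat.lcm m n) * star (1 : ℍ[ℝ])).re =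
        Real.cos (π / (2 * Nat.lcm m n)) / Real.sqrt 2 ∧
    sInf {t : ℝ | ∃ a ∈ binD m, ∃ b ∈ binD n,
        t = Real.arccos ((a * dihVertex (Nat.lcm m n) * star b).re)} =
      Real.arccos (Real.cos (π / (2 * Nat.lcm m n)) / Real.sqrt 2) ∧
    sSup {d : ℝ | ∃ x y : ℍ[ℝ], ‖x‖ = 1 ∧ ‖y‖ = 1 ∧
        d = sInf {t : ℝ | ∃ a ∈ binD m, ∃ b ∈ binD n,
          t = Real.arccos ((a * x * star b * star y).re)}} > π / 4 := by
  set L : ℕ := Nat.lcm m n with hLdef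
  have hL : 1 ≤ L := Nat.lcm_pos hm hn
  have hL0 : (0:ℝ) < (L:ℝ) := by exact_mod_cast hL
  set km : ℕ := L / m with hkmdef
  set kn : ℕ := L / n with hkndef
  have hkm : km * m = L := Nat.div_mul_cancel (Nat.dvd_lcm_left m n)
  have hkn : kn * n = L := Nat.div_mul_cancel (Nat.dvd_lcm_right m n)
  set θ : ℝ := π / (2 * (L:ℝ)) with hθdef
  have hθ0 : 0 < θ := by positivity
  have hs2 : Real.sqrt 2 * Real.sqrt 2 = 2 := Real.mul_self_sqrt (by norm_num)
  have hs2pos : (0:ℝ) < Real.sqrt 2 := by positivity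
  -- the generic step
  have hstep : ∀ (t : ℤ) (X : ℝ), X = (2 * (t:ℝ) + 1) * θ →
      Real.cos X / Real.sqrt 2 ≤ Real.cos θ / Real.sqrt 2 := by
    intro t X hX
    rw [hX]
    have h := cos_odd_le L hL t
    rw [← hθdef] at h
    gcongr
  -- Part 1: the inequality
  have part1 : ∀ a ∈ binD m, ∀ b ∈ binD n,
      (a * dihVertex L * star b).re ≤ Real.cos (π / (2 * (L:ℝ))) / Real.sqrt 2 := by
    intro a ha b hb
    have hVert : dihVertex L = (⟨Real.cos θ/Real.sqrt 2, Real.cos θ/Real.sqrt 2,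
        Real.sin θ/Real.sqrt 2, Real.sin θ/Real.sqrt 2⟩ : ℍ[ℝ]) := rfl
    rcases ha with ⟨p, _, rfl⟩ | ⟨p, _, rfl⟩ <;> rcases hb with ⟨q, _, rfl⟩ | ⟨q, _, rfl⟩
    · erw [show cycElt m p = (⟨Real.cos ((p:ℝ)*π/m),0,0,Real.sin ((p:ℝ)*π/m)⟩ : ℍ[ℝ]) from rfl,
        show cycElt n q = (⟨Real.cos ((q:ℝ)*π/n),0,0,Real.sin ((q:ℝ)*π/n)⟩ : ℍ[ℝ]) from rfl,
        hVert, re_cc, ← hθdef]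
      apply hstep ((p:ℤ) * km - (q:ℤ) * kn)
      rw [angle_eq hm hL hkm p, angle_eq hn hL hkn q, ← hθdef]
      push_cast
      ring
    · erw [show cycElt m p = (⟨Real.cos ((p:ℝ)*π/m),0,0,Real.sin ((p:ℝ)*π/m)⟩ : ℍ[ℝ]) from rfl,
        show dihElt n q = (⟨0,Real.cos ((q:ℝ)*π/n),Real.sin ((q:ℝ)*π/n),0⟩ : ℍ[ℝ]) from rfl,
        hVert, re_cd, ← hθdef]
      apply hstep ((p:ℤ) * km - (q:ℤ) * kn)
      rw [angle_eq hm hL hkm p, angle_eq hn hL hkn q, ← hθdef]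
      push_cast
      ring
    · erw [show dihElt m p = (⟨0,Real.cos ((p:ℝ)*π/m),Real.sin ((p:ℝ)*π/m),0⟩ : ℍ[ℝ]) from rfl,
        show cycElt n q = (⟨Real.cos ((q:ℝ)*π/n),0,0,Real.sin ((q:ℝ)*π/n)⟩ : ℍ[ℝ]) from rfl,
        hVert, re_dc, ← hθdef]
      have hflip : -(Real.cos (θ - (p:ℝ)*π/m + (q:ℝ)*π/n) / Real.sqrt 2) =
          Real.cos ((θ - (p:ℝ)*π/m + (q:ℝ)*π/n) + π) / Real.sqrt 2 := by
        rw [Real.cos_add_pi]; ring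
      rw [hflip]
      apply hstep ((q:ℤ) * kn - (p:ℤ) * km + L)
      have hpi : π = 2 * (L:ℝ) * θ := by rw [hθdef]; field_simp
      rw [angle_eq hm hL hkm p, angle_eq hn hL hkn q, ← hθdef]
      push_cast
      linear_combination hpi
    · erw [show dihElt m p = (⟨0,Real.cos ((p:ℝ)*π/m),Real.sin ((p:ℝ)*π/m),0⟩ : ℍ[ℝ]) from rfl,
        show dihElt n q = (⟨0,Real.cos ((q:ℝ)*π/n),Real.sin ((q:ℝ)*π/n),0⟩ : ℍ[ℝ]) from rfl,
        hVert, re_dd, ← hθdef]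
      apply hstep ((q:ℤ) * kn - (p:ℤ) * km)
      rw [angle_eq hm hL hkm p, angle_eq hn hL hkn q, ← hθdef]
      push_cast
      ring
  -- Part 2: value at a = b = 1
  have part2 : ((1 : ℍ[ℝ]) * dihVertex L * star (1 : ℍ[ℝ])).re =
      Real.cos (π / (2 * (L:ℝ))) / Real.sqrt 2 := by
    rw [one_mul, star_one, mul_one]
    rfl
  -- Part 3: the infimum
  set S : Set ℝ := {t : ℝ | ∃ a ∈ binD m, ∃ b ∈ binD n,
      t = Real.arccos ((a * dihVertex L * star b).re)} with hSdef
  have hmemS : Real.arccos (Real.cos (π / (2 * (L:ℝ))) / Real.sqrt 2) ∈ S :=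
    ⟨1, one_mem_binD hm, 1, one_mem_binD hn, by rw [part2]⟩
  have hbddS : BddBelow S := by
    refine ⟨0, ?_⟩
    rintro t ⟨a, _, b, _, rfl⟩
    exact Real.arccos_nonneg _
  have part3 : sInf S = Real.arccos (Real.cos (π / (2 * (L:ℝ))) / Real.sqrt 2) := by
    apply le_antisymm (csInf_le hbddS hmemS)
    apply le_csInf ⟨_, hmemS⟩
    rintro t ⟨a, ha, b, hb, rfl⟩
    exact arccos_antitone (part1 a ha b hb)
  refine ⟨part1, part2, part3, ?_⟩
  -- Part 4: the diameter bound
  set D : Set ℝ := {d : ℝ | ∃ x y : ℍ[ℝ], ‖x‖ = 1 ∧ ‖y‖ = 1 ∧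
      d = sInf {t : ℝ | ∃ a ∈ binD m, ∃ b ∈ binD n,
        t = Real.arccos ((a * x * star b * star y).re)}} with hDdef
  have hmemD : Real.arccos (Real.cos (π / (2 * (L:ℝ))) / Real.sqrt 2) ∈ D := by
    refine ⟨dihVertex L, 1, dihVertex_norm L, norm_one, ?_⟩
    have hset : {t : ℝ | ∃ a ∈ binD m, ∃ b ∈ binD n,
        t = Real.arccos ((a * dihVertex L * star b * star (1:ℍ[ℝ])).re)} = S := by
      simp only [hSdef, star_one, mul_one]
    rw [hset, part3]
  have hbddD : BddAbove D := by
    refine ⟨π, ?_⟩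
    rintro d ⟨x, y, hx, hy, rfl⟩
    have hne : Real.arccos (((1:ℍ[ℝ]) * x * star (1:ℍ[ℝ]) * star y).re) ∈
        {t : ℝ | ∃ a ∈ binD m, ∃ b ∈ binD n,
          t = Real.arccos ((a * x * star b * star y).re)} :=
      ⟨1, one_mem_binD hm, 1, one_mem_binD hn, rfl⟩
    refine csInf_le_of_le ⟨0, ?_⟩ hne (Real.arccos_le_pi _)
    rintro t ⟨a, _, b, _, rfl⟩
    exact Real.arccos_nonneg _
  have hlt : π / 4 < Real.arccos (Real.cos (π / (2 * (L:ℝ))) / Real.sqrt 2) := by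
    have hθπ : θ ≤ π := by
      have hL1 : (1:ℝ) ≤ (L:ℝ) := by exact_mod_cast hL
      rw [hθdef, div_le_iff₀ (by positivity)]
      nlinarith [Real.pi_pos]
    have hc1 : Real.cos (π / (2 * (L:ℝ))) < 1 := by
      rw [← Real.cos_zero, ← hθdef]
      exact Real.cos_lt_cos_of_nonneg_of_le_pi le_rfl hθπ hθ0
    apply lt_of_not_ge
    intro hcon
    rw [Real.arccos_le_pi_div_four] at hcon
    have h1' := mul_le_mul_of_nonneg_left hcon hs2pos.le
    have e1 : Real.sqrt 2 * (Real.sqrt 2 / 2) = 1 := by linear_combination hs2 / 2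
    have e2 : Real.sqrt 2 * (Real.cos (π / (2 * (L:ℝ))) / Real.sqrt 2) =
        Real.cos (π / (2 * (L:ℝ))) := by field_simp
    rw [e1, e2] at h1'
    linarith
  exact lt_of_lt_of_le hlt (le_csSup hbddD hmemD)

end
end

section
/- Let n ≥ 1 and let G ⊂ O(n+1) be the group of signed permutations of coordinates of ℝ^{n+1} (the full symmetry group of the cubic tessellation of Sⁿ). Then the diameter of the orbit space Sⁿ/G equals arccos(1/√(n+1)). Explicitly: (i) for all unit vectors x, y ∈ ℝ^{n+1} there exist a permutation σ of the coordinates and signs ε_i ∈ {1, −1} such that ∑_i ε_i · x_{σ(i)} · y_i ≥ 1/√(n+1); and (ii) taking x to be a standard basis vector and y = (1, 1, …, 1)/√(n+1), every signed permutation g satisfies ⟨g·x, y⟩ ≤ 1/√(n+1). -/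
open Real
open Finset

/-- Abel summation. -/
private lemma abel_aux (f g : ℕ → ℝ) (m : ℕ) :
    ∑ i ∈ range m, f i * g i =
      (∑ k ∈ range m, (f k - f (k + 1)) * (∑ i ∈ range (k + 1), g i))
        + f m * (∑ i ∈ range m, g i) := by
  induction m with
  | zero => simp
  | succ m ih =>
      rw [sum_range_succ (fun i => f i * g i), ih,
        sum_range_succ (fun k => (f k - f (k + 1)) * (∑ i ∈ range (k + 1), g i)),
        sum_range_succ g]
      ring

private lemma prefix_avg (m k : ℕ) (hk : k ≤ m) (c : ℕ → ℝ)
    (hc0 : ∀ i, 0 ≤ c i) (hcA : ∀ i j, i ≤ j → c j ≤ c i) :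
    (k : ℝ) * ∑ i ∈ range m, c i ≤ (m : ℝ) * ∑ i ∈ range k, c i := by
  have hsplit : (∑ i ∈ range k, c i) + ∑ i ∈ Ico k m, c i = ∑ i ∈ range m, c i :=
    sum_range_add_sum_Ico c hk
  have h1 : ∑ i ∈ Ico k m, c i ≤ (m - k : ℕ) * c k := by
    have := Finset.sum_le_card_nsmul (Ico k m) c (c k) (fun i hi => hcA k i (mem_Ico.1 hi).1)
    simpa [Nat.card_Ico, nsmul_eq_mul] using this
  have h2 : (k : ℝ) * c k ≤ ∑ i ∈ range k, c i := by
    have := Finset.card_nsmul_le_sum (range k) c (c k) (fun i hi => hcA i k (mem_range.1 hi).le)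
    simpa [nsmul_eq_mul] using this
  have hck : 0 ≤ c k := hc0 k
  have hcast : ((m - k : ℕ) : ℝ) = (m : ℝ) - k := by
    push_cast [hk]; ring
  rw [hcast] at h1
  have hkm : (k : ℝ) ≤ m := Nat.cast_le.2 hk
  nlinarith [h2, h1, hck, hkm]

private lemma key_ineq (m : ℕ) (hm : 0 < m) (a b : ℕ → ℝ)
    (ha0 : ∀ i, 0 ≤ a i) (hb0 : ∀ i, 0 ≤ b i)
    (haA : ∀ k, a (k + 1) ≤ a k) (hbA : ∀ k, b (k + 1) ≤ b k)
    (ham : a m = 0)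
    (ha : ∑ i ∈ range m, a i ^ 2 = 1) (hb : ∑ i ∈ range m, b i ^ 2 = 1) :
    1 / Real.sqrt m ≤ ∑ i ∈ range m, a i * b i := by
  have hmR : (0 : ℝ) < m := by exact_mod_cast hm
  have hsm : (0 : ℝ) < Real.sqrt m := Real.sqrt_pos.2 hmR
  have haA' : ∀ i j : ℕ, i ≤ j → a j ≤ a i := fun i j h =>
    antitone_nat_of_succ_le haA h
  have hbA' : ∀ i j : ℕ, i ≤ j → b j ≤ b i := fun i j h =>
    antitone_nat_of_succ_le hbA h
  -- prefix sums of b dominate √((k+1)/m)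
  have hB : ∀ k ∈ range m, Real.sqrt (k + 1) / Real.sqrt m ≤ ∑ i ∈ range (k + 1), b i := by
    intro k hk
    have hk' : k + 1 ≤ m := mem_range.1 hk
    have h1 : ((k : ℝ) + 1) / m ≤ ∑ i ∈ range (k + 1), b i ^ 2 := by
      have := prefix_avg m (k + 1) hk' (fun i => b i ^ 2)
        (fun i => sq_nonneg _)
        (fun i j hij => by
          nlinarith [hbA' i j hij, hb0 j])
      rw [hb] at this
      rw [div_le_iff₀ hmR]
      push_cast at this ⊢
      linarith
    have h2 : ∑ i ∈ range (k + 1), b i ^ 2 ≤ (∑ i ∈ range (k + 1), b i) ^ 2 :=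
      Finset.sum_sq_le_sq_sum_of_nonneg (fun i _ => hb0 i)
    have h3 : Real.sqrt (((k : ℝ) + 1) / m) ≤ ∑ i ∈ range (k + 1), b i := by
      have := Real.sqrt_le_sqrt (h1.trans h2)
      rwa [Real.sqrt_sq (Finset.sum_nonneg fun i _ => hb0 i)] at this
    calc Real.sqrt (k + 1) / Real.sqrt m
        = Real.sqrt (((k : ℝ) + 1) / m) := by
          rw [Real.sqrt_div (by positivity)]
      _ ≤ _ := h3
  -- prefix sums of a bounded by √(k+1)
  have hA : ∀ k ∈ range m, ∑ i ∈ range (k + 1), a i ≤ Real.sqrt (k + 1) := by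
    intro k hk
    have hk' : k + 1 ≤ m := mem_range.1 hk
    have h1 : (∑ i ∈ range (k + 1), a i) ^ 2 ≤ ((k : ℝ) + 1) * ∑ i ∈ range (k + 1), a i ^ 2 := by
      have := sq_sum_le_card_mul_sum_sq (s := range (k + 1)) (f := a)
      simpa using this
    have h2 : ∑ i ∈ range (k + 1), a i ^ 2 ≤ 1 := by
      rw [← ha]
      exact Finset.sum_le_sum_of_subset_of_nonneg (Finset.range_subset_range.2 hk')
        (fun i _ _ => sq_nonneg _)
    have h3 : (∑ i ∈ range (k + 1), a i) ^ 2 ≤ (k : ℝ) + 1 := by nlinarith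
    have := Real.sqrt_le_sqrt h3
    rwa [Real.sqrt_sq (Finset.sum_nonneg fun i _ => ha0 i)] at this
  have hdiff : ∀ k, 0 ≤ a k - a (k + 1) := fun k => sub_nonneg.2 (haA k)
  -- Abel for a·a gives 1 ≤ ∑ (a k - a (k+1)) √(k+1)
  have h1 : (1 : ℝ) ≤ ∑ k ∈ range m, (a k - a (k + 1)) * Real.sqrt (k + 1) := by
    have habel := abel_aux a a m
    have : ∑ i ∈ range m, a i * a i = 1 := by
      rw [← ha]; exact Finset.sum_congr rfl fun i _ => (sq (a i)).symm
    rw [this, ham, zero_mul, add_zero] at habel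
    exact habel.le.trans (Finset.sum_le_sum fun k hk =>
      mul_le_mul_of_nonneg_left (hA k hk) (hdiff k))
  -- Abel for a·b
  have habel := abel_aux a b m
  rw [ham, zero_mul, add_zero] at habel
  rw [habel]
  have h2 : ∑ k ∈ range m, (a k - a (k + 1)) * (Real.sqrt (k + 1) / Real.sqrt m) ≤
      ∑ k ∈ range m, (a k - a (k + 1)) * ∑ i ∈ range (k + 1), b i :=
    Finset.sum_le_sum fun k hk => mul_le_mul_of_nonneg_left (hB k hk) (hdiff k)
  refine le_trans ?_ h2
  have : ∑ k ∈ range m, (a k - a (k + 1)) * (Real.sqrt (k + 1) / Real.sqrt m) =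
      (∑ k ∈ range m, (a k - a (k + 1)) * Real.sqrt (k + 1)) / Real.sqrt m := by
    rw [Finset.sum_div]
    exact Finset.sum_congr rfl fun k _ => by ring
  rw [this]
  rw [div_le_div_iff₀ hsm hsm] at *
  · nlinarith



/-- Let `G ⊂ O(n+1)` be the group of signed permutations of coordinates
(the full symmetry group of the cubic tessellation of `Sⁿ`).  The diameter of `Sⁿ/G` is
`arccos(1/√(n+1))`.  Explicitly: (i) any two unit vectors can be moved within geodesic
distance `arccos(1/√(n+1))` of each other by a signed permutation, i.e. some signed
permutation makes their inner product at least `1/√(n+1)`; and (ii) for `x` a standard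
basis vector and `y = (1,…,1)/√(n+1)`, every signed permutation `g` satisfies
`⟨g·x, y⟩ ≤ 1/√(n+1)`. -/
theorem diameter_Sn_mod_signedPermutations (n : ℕ) (hn : 1 ≤ n) :
    (∀ x y : Fin (n + 1) → ℝ, (∑ i, x i ^ 2) = 1 → (∑ i, y i ^ 2) = 1 →
      ∃ σ : Equiv.Perm (Fin (n + 1)), ∃ ε : Fin (n + 1) → ℝ,
        (∀ i, ε i = 1 ∨ ε i = -1) ∧
        1 / Real.sqrt (n + 1) ≤ ∑ i, ε i * x (σ i) * y i) ∧
    (∀ σ : Equiv.Perm (Fin (n + 1)), ∀ ε : Fin (n + 1) → ℝ,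
      (∀ i, ε i = 1 ∨ ε i = -1) →
      (∑ i, ε i * (if σ i = 0 then (1 : ℝ) else 0) * (1 / Real.sqrt (n + 1))) ≤
        1 / Real.sqrt (n + 1)) := by
  set m := n + 1 with hm
  have hsqrt : (0:ℝ) ≤ 1 / Real.sqrt (n + 1) := by positivity
  constructor
  · intro x y hx hy
    set τ := Tuple.sort (fun i => -|x i|) with hτdef
    set ρ := Tuple.sort (fun i => -|y i|) with hρdef
    have hτmono : ∀ i j : Fin m, i ≤ j → |x (τ j)| ≤ |x (τ i)| := by
      intro i j hij
      have := Tuple.monotone_sort (fun i => -|x i|) hij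
      simpa using this
    have hρmono : ∀ i j : Fin m, i ≤ j → |y (ρ j)| ≤ |y (ρ i)| := by
      intro i j hij
      have := Tuple.monotone_sort (fun i => -|y i|) hij
      simpa using this
    set a : ℕ → ℝ := fun k => if h : k < m then |x (τ ⟨k, h⟩)| else 0 with hadef
    set b : ℕ → ℝ := fun k => if h : k < m then |y (ρ ⟨k, h⟩)| else 0 with hbdef
    have ha0 : ∀ i, 0 ≤ a i := by intro i; simp only [hadef]; split <;> positivity
    have hb0 : ∀ i, 0 ≤ b i := by intro i; simp only [hbdef]; split <;> positivity
    have haA : ∀ k, a (k + 1) ≤ a k := by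
      intro k
      simp only [hadef]
      split
      · next h1 =>
        rw [dif_pos (Nat.lt_of_succ_lt h1)]
        exact hτmono ⟨k, _⟩ ⟨k + 1, h1⟩ (by simp [Fin.le_def])
      · next h1 =>
        split
        · positivity
        · exact le_refl 0
    have hbA : ∀ k, b (k + 1) ≤ b k := by
      intro k
      simp only [hbdef]
      split
      · next h1 =>
        rw [dif_pos (Nat.lt_of_succ_lt h1)]
        exact hρmono ⟨k, _⟩ ⟨k + 1, h1⟩ (by simp [Fin.le_def])
      · next h1 =>
        split
        · positivity
        · exact le_refl 0
    have ham : a m = 0 := dif_neg (lt_irrefl m)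
    have hsuma : ∑ i ∈ range m, a i ^ 2 = 1 := by
      rw [← Fin.sum_univ_eq_sum_range (fun k => a k ^ 2) m]
      have : ∀ i : Fin m, a i ^ 2 = x (τ i) ^ 2 := by
        intro i
        simp only [hadef, dif_pos i.isLt, Fin.eta, sq_abs]
      rw [Finset.sum_congr rfl fun i _ => this i]
      rw [Equiv.sum_comp τ (fun i => x i ^ 2)]
      exact hx
    have hsumb : ∑ i ∈ range m, b i ^ 2 = 1 := by
      rw [← Fin.sum_univ_eq_sum_range (fun k => b k ^ 2) m]
      have : ∀ i : Fin m, b i ^ 2 = y (ρ i) ^ 2 := by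
        intro i
        simp only [hbdef, dif_pos i.isLt, Fin.eta, sq_abs]
      rw [Finset.sum_congr rfl fun i _ => this i]
      rw [Equiv.sum_comp ρ (fun i => y i ^ 2)]
      exact hy
    have hkey := key_ineq m (Nat.succ_pos n) a b ha0 hb0 haA hbA ham hsuma hsumb
    refine ⟨τ * ρ⁻¹, fun i => if x ((τ * ρ⁻¹) i) * y i < 0 then -1 else 1, ?_, ?_⟩
    · intro i; dsimp only; split <;> simp
    · have hterm : ∀ i : Fin m,
          (if x ((τ * ρ⁻¹) i) * y i < 0 then (-1:ℝ) else 1) * x ((τ * ρ⁻¹) i) * y i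
            = |x ((τ * ρ⁻¹) i)| * |y i| := by
        intro i
        rw [← abs_mul]
        split
        · next h => rw [abs_of_neg h]; ring
        · next h => rw [abs_of_nonneg (not_lt.1 h)]; ring
      rw [Finset.sum_congr rfl fun i _ => hterm i]
      have hre : ∑ i : Fin m, |x ((τ * ρ⁻¹) i)| * |y i|
          = ∑ k ∈ range m, a k * b k := by
        rw [← Equiv.sum_comp ρ (fun i => |x ((τ * ρ⁻¹) i)| * |y i|)]
        rw [← Fin.sum_univ_eq_sum_range (fun k => a k * b k) m]
        refine Finset.sum_congr rfl fun k _ => ?_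
        simp only [hadef, hbdef, dif_pos k.isLt, Fin.eta, Equiv.Perm.mul_apply,
          Equiv.Perm.inv_def, Equiv.symm_apply_apply, dif_pos (show (k : ℕ) < m from k.isLt)]
      rw [hre]
      have : ((m : ℝ)) = (n : ℝ) + 1 := by push_cast [hm]; ring
      rw [← this]
      exact hkey
  · intro σ ε hε
    have hterm : ∀ i : Fin m,
        ε i * (if σ i = 0 then (1:ℝ) else 0) * (1 / Real.sqrt (n + 1))
          = if i = σ⁻¹ 0 then ε i * (1 / Real.sqrt (n + 1)) else 0 := by
      intro i
      by_cases h : σ i = 0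
      · rw [if_pos h, if_pos (by rw [← h]; simp)]
        ring
      · rw [if_neg h, if_neg (by intro hc; apply h; rw [hc]; simp)]
        ring
    rw [Finset.sum_congr rfl fun i _ => hterm i, Finset.sum_ite_eq' Finset.univ (σ⁻¹ 0)
      (fun i => ε i * (1 / Real.sqrt (n + 1))), if_pos (Finset.mem_univ _)]
    rcases hε (σ⁻¹ 0) with h | h <;> rw [h]
    · rw [one_mul]
    · nlinarith [hsqrt]
end
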